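/- For all real numbers a, b, R with 0 < a ≤ b and 0 < R, there exists a constant h₀ > 0 (depending only on a, b, R) such that for all points p, q, r, c in ℍ, if the three distances dist p q, dist q r, dist p r all lie in the interval [a, b], and c is a circumcenter of p, q, r of radius at most R (i.e. dist c p = dist c q = dist c r ≤ R), then all three altitudes of the triangle are at least h₀: Metric.infDist p (L(q,r)) ≥ h₀, Metric.infDist q (L(p,r)) ≥ h₀, and Metric.infDist r (L(p,q)) ≥ h₀. (Paper's Lemma 6: a geodesic triangle in the hyperbolic plane with edge lengths in [a,b] and circumradius at most R has altitudes bounded below by a positive constant h₀(a,b,R).) -/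

import Mathlib

open scoped UpperHalfPlane

/-- The geodesic line through `q` and `r` in the hyperbolic plane: the set of points
metrically collinear with `q` and `r`. -/
def geodLine (q r : ℍ) : Set ℍ :=
  {x | dist q x + dist x r = dist q r ∨ dist q r + dist r x = dist q x ∨
       dist x q + dist q r = dist x r}

open scoped UpperHalfPlane
open UpperHalfPlane Real



noncomputable section MoebiusAux

variable {a b c d : ℝ}

lemma moeb_denom_ne (h : a * d - b * c = 1) (z : ℍ) : (c : ℂ) * z + d ≠ 0 := by
  rcases eq_or_ne c 0 with hc | hc
  · subst hc
    simp only [Complex.ofReal_zero, zero_mul, zero_add]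
    have : d ≠ 0 := by rintro rfl; simp at h
    exact_mod_cast this
  · intro hzero
    have him : ((c : ℂ) * z + d).im = c * z.im := by
      simp [Complex.add_im, Complex.mul_im, UpperHalfPlane.coe_im]
    rw [hzero] at him
    have : c * z.im = 0 := by simpa using him.symm
    exact hc (by
      rcases mul_eq_zero.1 this with h' | h'
      · exact h'
      · exact absurd h' z.im_ne_zero)

lemma moeb_im_eq (h : a * d - b * c = 1) (z : ℍ) :
    ((( a : ℂ) * z + b) / ((c : ℂ) * z + d)).im
      = z.im / Complex.normSq ((c : ℂ) * z + d) := by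
  rw [Complex.div_im]
  have h1 : ((a : ℂ) * z + b).im = a * z.im := by
    simp [Complex.add_im, Complex.mul_im, UpperHalfPlane.coe_im]
  have h2 : ((a : ℂ) * z + b).re = a * z.re + b := by
    simp [Complex.add_re, Complex.mul_re, UpperHalfPlane.coe_re, UpperHalfPlane.coe_im]
  have h3 : ((c : ℂ) * z + d).im = c * z.im := by
    simp [Complex.add_im, Complex.mul_im, UpperHalfPlane.coe_im]
  have h4 : ((c : ℂ) * z + d).re = c * z.re + d := by
    simp [Complex.add_re, Complex.mul_re, UpperHalfPlane.coe_re, UpperHalfPlane.coe_im]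
  rw [h1, h2, h3, h4]
  linear_combination z.im * (Complex.normSq ((c : ℂ) * z + d))⁻¹ * h

lemma moeb_im_pos (h : a * d - b * c = 1) (z : ℍ) :
    0 < ((( a : ℂ) * z + b) / ((c : ℂ) * z + d)).im := by
  rw [moeb_im_eq h z]
  exact div_pos z.im_pos (Complex.normSq_pos.2 (moeb_denom_ne h z))

/-- The Möbius transformation of the upper half plane with real coefficients. -/
def moeb (a b c d : ℝ) (h : a * d - b * c = 1) (z : ℍ) : ℍ :=
  UpperHalfPlane.mk (((a : ℂ) * z + b) / ((c : ℂ) * z + d)) (moeb_im_pos h z)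

lemma moeb_coe (h : a * d - b * c = 1) (z : ℍ) :
    (moeb a b c d h z : ℂ) = ((a : ℂ) * z + b) / ((c : ℂ) * z + d) := rfl

lemma moeb_im (h : a * d - b * c = 1) (z : ℍ) :
    (moeb a b c d h z).im = z.im / Complex.normSq ((c : ℂ) * z + d) :=
  moeb_im_eq h z

lemma moeb_sub (h : a * d - b * c = 1) (z w : ℍ) :
    (moeb a b c d h z : ℂ) - (moeb a b c d h w : ℂ)
      = ((z : ℂ) - w) / (((c : ℂ) * z + d) * ((c : ℂ) * w + d)) := by
  have hz := moeb_denom_ne h z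
  have hw := moeb_denom_ne h w
  have hdet : (a : ℂ) * d - (b : ℂ) * c = 1 := by exact_mod_cast h
  rw [moeb_coe, moeb_coe, div_sub_div _ _ hz hw]
  congr 1
  linear_combination ((z : ℂ) - (w : ℂ)) * hdet

end MoebiusAux

noncomputable section

variable {a b c d : ℝ}

lemma moeb_dist (h : a * d - b * c = 1) (z w : ℍ) :
    dist (moeb a b c d h z) (moeb a b c d h w) = dist z w := by
  set Az : ℝ := ‖(c : ℂ) * z + d‖ with hAz
  set Aw : ℝ := ‖(c : ℂ) * w + d‖ with hAw
  have hAz0 : 0 < Az := by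
    rw [hAz]; exact norm_pos_iff.2 (moeb_denom_ne h z)
  have hAw0 : 0 < Aw := by
    rw [hAw]; exact norm_pos_iff.2 (moeb_denom_ne h w)
  rw [UpperHalfPlane.dist_eq, UpperHalfPlane.dist_eq]
  congr 1
  congr 1
  -- numerator
  have hnum : dist (moeb a b c d h z : ℂ) (moeb a b c d h w : ℂ)
      = dist (z : ℂ) (w : ℂ) / (Az * Aw) := by
    rw [Complex.dist_eq, Complex.dist_eq, moeb_sub h z w, norm_div, norm_mul]
  -- denominators
  have him : (moeb a b c d h z).im * (moeb a b c d h w).im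
      = z.im * w.im / (Az * Aw) ^ 2 := by
    rw [moeb_im h z, moeb_im h w, Complex.normSq_eq_norm_sq, Complex.normSq_eq_norm_sq,
      ← hAz, ← hAw]
    field_simp
  rw [hnum, him, Real.sqrt_div (by positivity) _, Real.sqrt_sq (by positivity)]
  have h2 : (0:ℝ) < √(z.im * w.im) := by positivity
  field_simp

end

noncomputable section

/-- cosh of the log-im distance. -/
lemma cosh_dist_log (z w : ℍ) :
    Real.cosh (dist (log z.im) (log w.im)) = 1 + (z.im - w.im) ^ 2 / (2 * z.im * w.im) := by
  have hz := z.im_pos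
  have hw := w.im_pos
  rw [Real.dist_eq, Real.cosh_abs, Real.cosh_eq, ← Real.log_div z.im_ne_zero w.im_ne_zero,
    Real.exp_log (by positivity), Real.exp_neg, Real.exp_log (by positivity)]
  field_simp
  ring

lemma dist_log_lt_of_re_ne (z w : ℍ) (h : z.re ≠ w.re) :
    dist (log z.im) (log w.im) < dist z w := by
  have hz := z.im_pos
  have hw := w.im_pos
  have hcosh : Real.cosh (dist (log z.im) (log w.im)) < Real.cosh (dist z w) := by
    rw [cosh_dist_log, UpperHalfPlane.cosh_dist]
    have hd2 : dist (z : ℂ) (w : ℂ) ^ 2 = (z.re - w.re) ^ 2 + (z.im - w.im) ^ 2 := by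
      rw [Complex.dist_eq_re_im, Real.sq_sqrt (by positivity)]
      simp [UpperHalfPlane.coe_re, UpperHalfPlane.coe_im]
    rw [hd2]
    have hre : 0 < (z.re - w.re) ^ 2 := by
      have : z.re - w.re ≠ 0 := sub_ne_zero.2 h
      positivity
    have hden : 0 < 2 * z.im * w.im := by positivity
    have key : (z.im - w.im) ^ 2 / (2 * z.im * w.im)
        < ((z.re - w.re) ^ 2 + (z.im - w.im) ^ 2) / (2 * z.im * w.im) := by
      apply div_lt_div_of_pos_right ?_ hden
      linarith
    linarith
  have := Real.cosh_lt_cosh.1 hcosh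
  calc dist (log z.im) (log w.im) ≤ |dist (log z.im) (log w.im)| := le_abs_self _
    _ < |dist z w| := this
    _ = dist z w := abs_of_nonneg dist_nonneg

end

noncomputable section
-- assume previous lemmas; test axis_eq
lemma axis_eq (c z w : ℍ) (hz : z.re = 0) (hw : w.re = 0) (hzw : z ≠ w)
    (h : dist c z = dist c w) : c.re ^ 2 + c.im ^ 2 = z.im * w.im := by
  have hcim := c.im_pos
  have hzim := z.im_pos
  have hwim := w.im_pos
  have hne : z.im ≠ w.im := by
    intro he
    exact hzw (UpperHalfPlane.ext' (hz.trans hw.symm) he)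
  have hc := congrArg Real.cosh h
  rw [UpperHalfPlane.cosh_dist, UpperHalfPlane.cosh_dist] at hc
  have hdz : dist (c : ℂ) (z : ℂ) ^ 2 = c.re ^ 2 + (c.im - z.im) ^ 2 := by
    rw [Complex.dist_eq_re_im, Real.sq_sqrt (by positivity)]
    simp only [UpperHalfPlane.coe_re, UpperHalfPlane.coe_im, hz]
    ring
  have hdw : dist (c : ℂ) (w : ℂ) ^ 2 = c.re ^ 2 + (c.im - w.im) ^ 2 := by
    rw [Complex.dist_eq_re_im, Real.sq_sqrt (by positivity)]
    simp only [UpperHalfPlane.coe_re, UpperHalfPlane.coe_im, hw]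
    ring
  rw [hdz, hdw] at hc
  have hc' : (c.re ^ 2 + (c.im - z.im) ^ 2) * (2 * c.im * w.im)
      = (c.re ^ 2 + (c.im - w.im) ^ 2) * (2 * c.im * z.im) := by
    have h1 : (c.re ^ 2 + (c.im - z.im) ^ 2) / (2 * c.im * z.im)
        = (c.re ^ 2 + (c.im - w.im) ^ 2) / (2 * c.im * w.im) := by linarith
    rw [div_eq_div_iff (by positivity) (by positivity)] at h1
    exact h1
  have key : (2 * c.im) * ((w.im - z.im) * (c.re ^ 2 + c.im ^ 2 - z.im * w.im)) = 0 := by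
    linear_combination hc'
  have h2 : (w.im - z.im) * (c.re ^ 2 + c.im ^ 2 - z.im * w.im) = 0 := by
    rcases mul_eq_zero.1 key with h' | h'
    · exact absurd h' (by positivity)
    · exact h'
  rcases mul_eq_zero.1 h2 with h' | h'
  · exact absurd (by linarith : w.im = z.im) (Ne.symm hne)
  · linarith

end

noncomputable section

variable {a b c d : ℝ}

lemma moeb_re (h : a * d - b * c = 1) (z : ℍ) :
    (moeb a b c d h z).re = ((a * z.re + b) * (c * z.re + d) + (a * z.im) * (c * z.im))
      / Complex.normSq ((c : ℂ) * z + d) := by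
  show (((a : ℂ) * z + b) / ((c : ℂ) * z + d)).re = _
  rw [Complex.div_re]
  have h1 : ((a : ℂ) * z + b).im = a * z.im := by
    simp [Complex.add_im, Complex.mul_im, UpperHalfPlane.coe_im]
  have h2 : ((a : ℂ) * z + b).re = a * z.re + b := by
    simp [Complex.add_re, Complex.mul_re, UpperHalfPlane.coe_re, UpperHalfPlane.coe_im]
  have h3 : ((c : ℂ) * z + d).im = c * z.im := by
    simp [Complex.add_im, Complex.mul_im, UpperHalfPlane.coe_im]
  have h4 : ((c : ℂ) * z + d).re = c * z.re + d := by
    simp [Complex.add_re, Complex.mul_re, UpperHalfPlane.coe_re, UpperHalfPlane.coe_im]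
  rw [h1, h2, h3, h4]
  ring

lemma normalize_num (pr pi x0 R0 v A B : ℝ) (hR0 : R0 ^ 2 = (pr - x0) ^ 2 + pi ^ 2)
    (hv : v = x0 + R0) (hA : A * (2 * R0) = -1) (hB : B = -A * v - 1) :
    (A * pr + B) * (1 * pr + -v) + A * pi * (1 * pi) = 0 := by
  subst hv hB
  linear_combination (-A) * hR0 + (x0 + R0 - pr) * hA

/-- Two points of ℍ can be moved to the imaginary axis by a real Moebius transformation. -/
lemma exists_moeb_axis (p q : ℍ) :
    ∃ A B C D : ℝ, ∃ h : A * D - B * C = 1,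
      (moeb A B C D h p).re = 0 ∧ (moeb A B C D h q).re = 0 := by
  rcases eq_or_ne p.re q.re with hre | hre
  · refine ⟨1, -p.re, 0, 1, by ring, ?_, ?_⟩
    · rw [moeb_re]; simp
    · rw [moeb_re]; simp [← hre]
  · obtain ⟨x0, hx0'⟩ : ∃ x : ℝ, x * (2 * (p.re - q.re))
        = p.re ^ 2 + p.im ^ 2 - q.re ^ 2 - q.im ^ 2 :=
      ⟨(p.re ^ 2 + p.im ^ 2 - q.re ^ 2 - q.im ^ 2) / (2 * (p.re - q.re)),
        by field_simp [sub_ne_zero.2 hre]⟩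
    set R0 : ℝ := √((p.re - x0) ^ 2 + p.im ^ 2) with hR0def
    have hR0pos : 0 < R0 := by
      rw [hR0def]
      apply Real.sqrt_pos.2
      have := p.im_pos
      positivity
    have hR0sq : R0 ^ 2 = (p.re - x0) ^ 2 + p.im ^ 2 := by
      rw [hR0def]
      exact Real.sq_sqrt (by positivity)
    have hR0sq' : R0 ^ 2 = (q.re - x0) ^ 2 + q.im ^ 2 := by
      rw [hR0sq]
      linear_combination -hx0'
    obtain ⟨A, hA'⟩ : ∃ A : ℝ, A * (2 * R0) = -1 :=
      ⟨-1 / (2 * R0), by field_simp⟩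
    refine ⟨A, -A * (x0 + R0) - 1, 1, -(x0 + R0), by ring, ?_, ?_⟩
    · rw [moeb_re]
      rw [normalize_num p.re p.im x0 R0 (x0 + R0) A _ hR0sq rfl hA' rfl]
      simp
    · rw [moeb_re]
      rw [normalize_num q.re q.im x0 R0 (x0 + R0) A _ hR0sq' rfl hA' rfl]
      simp

end

noncomputable section

/-- Three distinct points equidistant from a point of ℍ satisfy the strict triangle
inequality (they are not metrically collinear). -/
lemma strict_triangle_of_equidistant (p q r c : ℍ) (hpq : p ≠ q) (hpr : p ≠ r) (hqr : q ≠ r)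
    (h1 : dist c p = dist c q) (h2 : dist c q = dist c r) :
    dist p q < dist p r + dist r q := by
  rcases lt_or_eq_of_le (dist_triangle p r q) with h | heq
  · exact h
  exfalso
  obtain ⟨A, B, C, D, hdet, hp0, hq0⟩ := exists_moeb_axis p q
  set p' := moeb A B C D hdet p with hp'
  set q' := moeb A B C D hdet q with hq'
  set r' := moeb A B C D hdet r with hr'
  set c' := moeb A B C D hdet c with hc'
  have dpq : dist p' q' = dist p q := moeb_dist hdet p q
  have dpr : dist p' r' = dist p r := moeb_dist hdet p r
  have drq : dist r' q' = dist r q := moeb_dist hdet r q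
  have dcp : dist c' p' = dist c p := moeb_dist hdet c p
  have dcq : dist c' q' = dist c q := moeb_dist hdet c q
  have dcr : dist c' r' = dist c r := moeb_dist hdet c r
  -- r' lies on the imaginary axis
  have hr0 : r'.re = 0 := by
    by_contra hr0
    have l1 : dist (Real.log p'.im) (Real.log r'.im) < dist p' r' :=
      dist_log_lt_of_re_ne p' r' (by rw [hp0]; exact fun h => hr0 h.symm)
    have l2 : dist (Real.log r'.im) (Real.log q'.im) ≤ dist r' q' :=
      UpperHalfPlane.dist_log_im_le r' q'
    have l3 : dist p' q' = dist (Real.log p'.im) (Real.log q'.im) :=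
      UpperHalfPlane.dist_of_re_eq (by rw [hp0, hq0])
    have l4 : dist (Real.log p'.im) (Real.log q'.im)
        ≤ dist (Real.log p'.im) (Real.log r'.im) + dist (Real.log r'.im) (Real.log q'.im) :=
      dist_triangle _ _ _
    have : dist p' q' < dist p' r' + dist r' q' := by linarith
    rw [dpq, dpr, drq] at this
    linarith
  -- equidistance forces q' = r'
  have hK1 : c'.re ^ 2 + c'.im ^ 2 = p'.im * q'.im := by
    apply axis_eq c' p' q' hp0 hq0
    · intro h
      apply hpq
      have : dist p q = 0 := by rw [← dpq, h, dist_self]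
      exact dist_eq_zero.1 this
    · rw [dcp, dcq, h1]
  have hK2 : c'.re ^ 2 + c'.im ^ 2 = p'.im * r'.im := by
    apply axis_eq c' p' r' hp0 hr0
    · intro h
      apply hpr
      have : dist p r = 0 := by rw [← dpr, h, dist_self]
      exact dist_eq_zero.1 this
    · rw [dcp, dcr, h1, h2]
  have him : q'.im = r'.im := by
    have hp'im := p'.im_pos
    have := hK1.symm.trans hK2
    exact mul_left_cancel₀ (ne_of_gt hp'im) this
  have : q' = r' := UpperHalfPlane.ext' (hq0.trans hr0.symm) him
  apply hqr
  have hd : dist q r = 0 := by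
    rw [← moeb_dist hdet q r]
    show dist q' r' = 0
    rw [this, dist_self]
  exact dist_eq_zero.1 hd

end

noncomputable section

/-- Any point of ℍ can be moved to `I` by a real Moebius transformation. -/
lemma exists_moeb_to_I (p : ℍ) :
    ∃ A B C D : ℝ, ∃ h : A * D - B * C = 1,
      moeb A B C D h p = UpperHalfPlane.I := by
  have hpi := p.im_pos
  set s : ℝ := √p.im with hs
  have hs0 : 0 < s := Real.sqrt_pos.2 hpi
  have hssq : s ^ 2 = p.im := Real.sq_sqrt hpi.le
  have hdet : (1 / s) * s - (-p.re / s) * 0 = 1 := by field_simp; ring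
  refine ⟨1 / s, -p.re / s, 0, s, hdet, ?_⟩
  apply UpperHalfPlane.ext'
  · rw [moeb_re]
    have : ((1 / s) * p.re + -p.re / s) * (0 * p.re + s) + ((1 / s) * p.im) * (0 * p.im) = 0 := by
      field_simp
      ring
    rw [this, zero_div]
    rfl
  · rw [moeb_im]
    have : ((0 : ℝ) : ℂ) * p + s = (s : ℂ) := by push_cast; ring
    rw [this, Complex.normSq_ofReal]
    have : s * s = p.im := by nlinarith
    rw [this, div_self p.im_ne_zero]
    rfl


/-- Lower bound on the distance to the geodesic line via triangle excesses. -/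
lemma le_infDist_geodLine (h₀ : ℝ) (p q r : ℍ)
    (hA1 : 2 * h₀ ≤ dist p q + dist p r - dist q r)
    (hA2 : 2 * h₀ ≤ dist p q + dist q r - dist p r)
    (hA3 : 2 * h₀ ≤ dist p r + dist q r - dist p q) :
    h₀ ≤ Metric.infDist p (geodLine q r) := by
  by_contra hlt
  push_neg at hlt
  have hne : (geodLine q r).Nonempty := ⟨q, Or.inl (by rw [dist_self]; ring)⟩
  obtain ⟨y, hy, hyd⟩ := (Metric.infDist_lt_iff hne).1 hlt
  have c1 : dist y q = dist q y := dist_comm y q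
  have c2 : dist y r = dist r y := dist_comm y r
  have c3 : dist q p = dist p q := dist_comm q p
  rcases hy with h | h | h
  · have t1 := dist_triangle p y q
    have t2 := dist_triangle p y r
    linarith
  · have t1 := dist_triangle q p y
    have t2 := dist_triangle p y r
    linarith
  · have t1 := dist_triangle y p r
    have t2 := dist_triangle p y q
    have c4 : dist y p = dist p y := dist_comm y p
    linarith

end

noncomputable section

open Metric

/-- A geodesic triangle in the hyperbolic plane with edge lengths in `[a,b]` and
circumradius at most `R` has all three altitudes bounded below by a positive constant
`h₀` depending only on `a`, `b`, `R`. -/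
theorem thick_triangle_altitude_lower_bound (a b R : ℝ) (ha : 0 < a) (hab : a ≤ b)
    (hR : 0 < R) :
    ∃ h₀ : ℝ, 0 < h₀ ∧ ∀ p q r c : ℍ,
      dist p q ∈ Set.Icc a b → dist q r ∈ Set.Icc a b → dist p r ∈ Set.Icc a b →
      dist c p = dist c q → dist c q = dist c r → dist c r ≤ R →
      h₀ ≤ Metric.infDist p (geodLine q r) ∧
      h₀ ≤ Metric.infDist q (geodLine p r) ∧
      h₀ ≤ Metric.infDist r (geodLine p q) := by
  classical
  set PI : ℍ := UpperHalfPlane.I with hPI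
  set f : ℍ × ℍ × ℍ → ℝ := fun t =>
    min (dist PI t.1 + dist PI t.2.1 - dist t.1 t.2.1)
      (min (dist PI t.1 + dist t.1 t.2.1 - dist PI t.2.1)
        (dist PI t.2.1 + dist t.1 t.2.1 - dist PI t.1)) with hf
  set s : Set (ℍ × ℍ × ℍ) := {t | dist PI t.1 ∈ Set.Icc a b ∧ dist t.1 t.2.1 ∈ Set.Icc a b ∧
      dist PI t.2.1 ∈ Set.Icc a b ∧ dist t.2.2 PI = dist t.2.2 t.1 ∧
      dist t.2.2 t.1 = dist t.2.2 t.2.1 ∧ dist t.2.2 t.2.1 ≤ R} with hsdef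
  -- continuity facts
  have cd1 : Continuous fun t : ℍ × ℍ × ℍ => dist PI t.1 :=
    continuous_const.dist continuous_fst
  have cd2 : Continuous fun t : ℍ × ℍ × ℍ => dist t.1 t.2.1 :=
    continuous_fst.dist (continuous_fst.comp continuous_snd)
  have cd3 : Continuous fun t : ℍ × ℍ × ℍ => dist PI t.2.1 :=
    continuous_const.dist (continuous_fst.comp continuous_snd)
  have cd4 : Continuous fun t : ℍ × ℍ × ℍ => dist t.2.2 PI :=
    ((continuous_snd.comp continuous_snd).dist continuous_const)
  have cd5 : Continuous fun t : ℍ × ℍ × ℍ => dist t.2.2 t.1 :=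
    ((continuous_snd.comp continuous_snd).dist continuous_fst)
  have cd6 : Continuous fun t : ℍ × ℍ × ℍ => dist t.2.2 t.2.1 :=
    ((continuous_snd.comp continuous_snd).dist (continuous_fst.comp continuous_snd))
  have hcont : Continuous f :=
    ((cd1.add cd3).sub cd2).min (((cd1.add cd2).sub cd3).min ((cd3.add cd2).sub cd1))
  have hsclosed : IsClosed s := by
    rw [hsdef]
    exact ((isClosed_Icc.preimage cd1).inter
      ((isClosed_Icc.preimage cd2).inter
        ((isClosed_Icc.preimage cd3).inter
          ((isClosed_eq cd4 cd5).inter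
            ((isClosed_eq cd5 cd6).inter (isClosed_le cd6 continuous_const))))))
  have hssub : s ⊆ closedBall PI b ×ˢ (closedBall PI b ×ˢ closedBall PI R) := by
    rintro ⟨q, r, c⟩ ⟨h1, h2, h3, h4, h5, h6⟩
    refine ⟨?_, ?_, ?_⟩
    · exact mem_closedBall.2 (by rw [dist_comm]; exact h1.2)
    · exact mem_closedBall.2 (by rw [dist_comm]; exact h3.2)
    · exact mem_closedBall.2 (by rw [h4, h5]; exact h6)
  have hscompact : IsCompact s :=
    ((isCompact_closedBall PI b).prod
      ((isCompact_closedBall PI b).prod (isCompact_closedBall PI R))).of_isClosed_subset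
      hsclosed hssub
  -- pointwise positivity of f on s
  have hfpos : ∀ t ∈ s, 0 < f t := by
    rintro ⟨q, r, c⟩ ⟨h1, h2, h3, h4, h5, h6⟩
    have hIq : PI ≠ q := fun h => by
      have := h1.1; rw [h, dist_self] at this; linarith
    have hIr : PI ≠ r := fun h => by
      have := h3.1; rw [h, dist_self] at this; linarith
    have hqr : q ≠ r := fun h => by
      have := h2.1; rw [h, dist_self] at this; linarith
    have hA1 : 0 < dist PI q + dist PI r - dist q r := by
      have := strict_triangle_of_equidistant q r PI c hqr (Ne.symm hIq) (Ne.symm hIr)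
        h5 (h5.symm.trans h4.symm)
      have e1 : dist q PI = dist PI q := dist_comm q PI
      have e2 : dist PI r = dist r PI := dist_comm PI r
      linarith
    have hA2 : 0 < dist PI q + dist q r - dist PI r := by
      have := strict_triangle_of_equidistant PI r q c hIr hIq (Ne.symm hqr)
        (h4.trans h5) h5.symm
      linarith
    have hA3 : 0 < dist PI r + dist q r - dist PI q := by
      have := strict_triangle_of_equidistant PI q r c hIq hIr hqr h4 h5
      have e1 : dist r q = dist q r := dist_comm r q
      linarith
    simp only [hf, lt_min_iff]
    exact ⟨hA1, hA2, hA3⟩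
  -- uniform lower bound
  obtain ⟨ε, hε, hεle⟩ : ∃ ε : ℝ, 0 < ε ∧ ∀ t ∈ s, ε ≤ f t := by
    rcases s.eq_empty_or_nonempty with hse | hsne
    · exact ⟨1, one_pos, by rw [hse]; rintro t ⟨⟩⟩
    · obtain ⟨t₀, ht₀, hmin⟩ := hscompact.exists_isMinOn hsne hcont.continuousOn
      exact ⟨f t₀, hfpos t₀ ht₀, fun t ht => hmin ht⟩
  refine ⟨ε / 2, by linarith, ?_⟩
  intro p q r c hpq hqr hpr h1 h2 h3
  obtain ⟨A, B, C, D, hdet, hpI⟩ := exists_moeb_to_I p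
  set q' := moeb A B C D hdet q with hq'
  set r' := moeb A B C D hdet r with hr'
  set c' := moeb A B C D hdet c with hc'
  have dq' : dist PI q' = dist p q := by rw [hPI, ← hpI]; exact moeb_dist hdet p q
  have dr' : dist PI r' = dist p r := by rw [hPI, ← hpI]; exact moeb_dist hdet p r
  have dqr' : dist q' r' = dist q r := moeb_dist hdet q r
  have dcp' : dist c' PI = dist c p := by rw [hPI, ← hpI]; exact moeb_dist hdet c p
  have dcq' : dist c' q' = dist c q := moeb_dist hdet c q
  have dcr' : dist c' r' = dist c r := moeb_dist hdet c r
  have hmem : (q', r', c') ∈ s := by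
    refine ⟨?_, ?_, ?_, ?_, ?_, ?_⟩
    · rw [dq']; exact hpq
    · show dist q' r' ∈ Set.Icc a b; rw [dqr']; exact hqr
    · show dist PI r' ∈ Set.Icc a b; rw [dr']; exact hpr
    · show dist c' PI = dist c' q'; rw [dcp', dcq']; exact h1
    · show dist c' q' = dist c' r'; rw [dcq', dcr']; exact h2
    · show dist c' r' ≤ R; rw [dcr']; exact h3
  have hfle := hεle _ hmem
  have hfle' : ε ≤ min (dist p q + dist p r - dist q r)
      (min (dist p q + dist q r - dist p r) (dist p r + dist q r - dist p q)) := by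
    simpa only [hf, dq', dr', dqr'] using hfle
  have hA1 : ε ≤ dist p q + dist p r - dist q r := hfle'.trans (min_le_left _ _)
  have hA2 : ε ≤ dist p q + dist q r - dist p r :=
    hfle'.trans ((min_le_right _ _).trans (min_le_left _ _))
  have hA3 : ε ≤ dist p r + dist q r - dist p q :=
    hfle'.trans ((min_le_right _ _).trans (min_le_right _ _))
  have e1 : dist q p = dist p q := dist_comm q p
  have e2 : dist r p = dist p r := dist_comm r p
  have e3 : dist r q = dist q r := dist_comm r q
  refine ⟨?_, ?_, ?_⟩
  · exact le_infDist_geodLine _ p q r (by linarith) (by linarith) (by linarith)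
  · exact le_infDist_geodLine _ q p r (by linarith) (by linarith) (by linarith)
  · exact le_infDist_geodLine _ r p q (by linarith) (by linarith) (by linarith)

end
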